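/- For integers n ≥ 3 define s_n = (∑_{k=1}^{n−2} 1/k) + 13/(12(n−1)) + 5/(12n) − ln n. Then lim_{n→∞} n³·(s_n − γ) = 1/12; in particular (s_n)_{n≥3} converges to γ with rate of convergence exactly n^{−3}. -/

import Mathlib

open Filter Topology

noncomputable def s (n : ℕ) : ℝ :=
  (∑ k ∈ Finset.Icc 1 (n - 2), (1 : ℝ) / k) + 13 / (12 * ((n : ℝ) - 1)) + 5 / (12 * n)
    - Real.log n

noncomputable def fb (n : ℕ) : ℝ := 1 / (12 * (n:ℝ)^2 * ((n:ℝ) - 1))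

lemma aux0 (c : ℝ) : Tendsto (fun n : ℕ => ((n:ℝ) + c)⁻¹) atTop (𝓝 0) :=
  tendsto_inv_atTop_zero.comp (tendsto_atTop_add_const_right _ c tendsto_natCast_atTop_atTop)

lemma harm_sum (m : ℕ) : (∑ k ∈ Finset.Icc 1 m, (1:ℝ)/k) = ((harmonic m : ℚ) : ℝ) := by
  rw [harmonic_eq_sum_Icc]
  push_cast
  simp [one_div]

lemma key_ineq {x : ℝ} (hx : 3 ≤ x) : 2/x^5 ≤ 1/2 * (1/(x-1)^4 - 1/x^4) := by
  have hx0 : (0:ℝ) < x := by linarith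
  have hx1 : (0:ℝ) < x - 1 := by linarith
  have h2 : 3*x ≤ x^2 := by nlinarith
  have h3 : 3*x^2 ≤ x^3 := by nlinarith
  have hN : (0:ℝ) ≤ 10*x^3 - 20*x^2 + 15*x - 4 := by nlinarith
  have e : 1/2 * (1/(x-1)^4 - 1/x^4) - 2/x^5
      = (10*x^3 - 20*x^2 + 15*x - 4)/(2*(x-1)^4*x^5) := by
    field_simp
    ring
  have : (0:ℝ) ≤ 1/2 * (1/(x-1)^4 - 1/x^4) - 2/x^5 := by
    rw [e]; exact div_nonneg hN (by positivity)
  linarith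

lemma fb_zero : Tendsto fb atTop (𝓝 0) := by
  apply tendsto_of_tendsto_of_tendsto_of_le_of_le' tendsto_const_nhds
    tendsto_one_div_atTop_nhds_zero_nat
  · filter_upwards [eventually_ge_atTop 2] with n hn
    have h2 : (2:ℝ) ≤ n := by exact_mod_cast hn
    simp only [fb]
    exact le_of_lt (div_pos one_pos (by nlinarith))
  · filter_upwards [eventually_ge_atTop 2] with n hn
    have h2 : (2:ℝ) ≤ n := by exact_mod_cast hn
    simp only [fb]
    rw [div_le_div_iff₀ (by nlinarith) (by linarith)]
    nlinarith

lemma step_bound (n : ℕ) (hn : 3 ≤ n) :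
    |(s n - fb n) - (s (n+1) - fb (n+1))| ≤ 2 / (n:ℝ)^5 := by
  obtain ⟨m, rfl⟩ : ∃ m, n = m + 3 := ⟨n - 3, by omega⟩
  set x : ℝ := (m:ℝ) + 3 with hx
  clear_value x
  have hm0 : (0:ℝ) ≤ m := Nat.cast_nonneg m
  have hx3 : (3:ℝ) ≤ x := by rw [hx]; linarith
  have hx0 : (0:ℝ) < x := by linarith
  have hx1 : (0:ℝ) < x - 1 := by linarith
  have hxp : (0:ℝ) < x + 1 := by linarith
  have hcast1 : ((m + 3 + 1 : ℕ) : ℝ) = x + 1 := by rw [hx]; push_cast; ring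
  have hcast0 : ((m + 3 : ℕ) : ℝ) = x := by rw [hx]; push_cast; ring
  rw [show ((m + 3 : ℕ) : ℝ) = x from hcast0]
  -- sum split
  have hsum : (∑ k ∈ Finset.Icc 1 (m + 3 + 1 - 2), (1:ℝ)/k)
      = (∑ k ∈ Finset.Icc 1 (m + 3 - 2), (1:ℝ)/k) + 1/(x-1) := by
    have h1 : m + 3 + 1 - 2 = (m + 1) + 1 := by omega
    have h2 : m + 3 - 2 = m + 1 := by omega
    rw [h1, h2, Finset.sum_Icc_succ_top (by omega)]
    have : ((m + 1 + 1 : ℕ) : ℝ) = x - 1 := by rw [hx]; push_cast; ring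
    rw [this]
  -- log split
  have hlog : Real.log (x + 1) = Real.log x + Real.log (1 + 1/x) := by
    rw [← Real.log_mul (ne_of_gt hx0) (by positivity)]
    congr 1
    field_simp
  have hT : (s (m+3) - fb (m+3)) - (s (m+3+1) - fb (m+3+1))
      = (Real.log (1 + 1/x) - (1/x - 1/(2*x^2) + 1/(3*x^3) - 1/(4*x^4)))
        + (-(2*x+3)/(12*x^4*(x+1)^2)) := by
    simp only [s, fb, hcast0, hcast1, hsum, hlog]
    have e1 : x + 1 - 1 = x := by ring
    rw [e1]
    field_simp
    ring
  rw [hT]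
  have h1mx : (0:ℝ) < 1 - 1/x := by
    have : 1/x < 1 := by rw [div_lt_one hx0]; linarith
    linarith
  have hlb : |Real.log (1 + 1/x) - (1/x - 1/(2*x^2) + 1/(3*x^3) - 1/(4*x^4))|
      ≤ (1/x)^5 / (1 - 1/x) := by
    have hax : |(-(1/x))| < 1 := by
      rw [abs_neg, abs_of_pos (by positivity), div_lt_one hx0]; linarith
    have key := Real.abs_log_sub_add_sum_range_le hax 4
    have hsum4 : (∑ i ∈ Finset.range 4, (-(1/x)) ^ (i + 1) / (i + 1))
        = -(1/x - 1/(2*x^2) + 1/(3*x^3) - 1/(4*x^4)) := by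
      simp only [Finset.sum_range_succ, Finset.sum_range_zero, Nat.cast_ofNat,
        Nat.cast_zero, Nat.cast_one, Nat.cast_two]
      push_cast
      field_simp
      ring
    rw [hsum4, show (1:ℝ) - -(1/x) = 1 + 1/x from by ring,
      show |(-(1/x))| = 1/x from by rw [abs_neg, abs_of_pos (by positivity)]] at key
    rw [show Real.log (1 + 1/x) - (1/x - 1/(2*x^2) + 1/(3*x^3) - 1/(4*x^4))
      = -(1/x - 1/(2*x^2) + 1/(3*x^3) - 1/(4*x^4)) + Real.log (1 + 1/x) from by ring]
    exact key
  have hEb : |(-(2*x+3)/(12*x^4*(x+1)^2))| = (2*x+3)/(12*x^4*(x+1)^2) := by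
    rw [abs_div, abs_neg, abs_of_pos (by linarith), abs_of_pos (by positivity)]
  calc |(Real.log (1 + 1/x) - (1/x - 1/(2*x^2) + 1/(3*x^3) - 1/(4*x^4)))
        + (-(2*x+3)/(12*x^4*(x+1)^2))|
      ≤ (1/x)^5 / (1 - 1/x) + (2*x+3)/(12*x^4*(x+1)^2) := by
        refine (abs_add_le _ _).trans ?_
        rw [hEb]
        exact add_le_add_left hlb _
    _ ≤ 3/2 / x^5 + 1/2 / x^5 := by
        have e2 : (1/x)^5 / (1 - 1/x) = 1/(x^4*(x-1)) := by
          field_simp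
        rw [e2]
        have i1 : 1/(x^4*(x-1)) ≤ 3/2 / x^5 := by
          rw [div_le_div_iff₀ (by positivity) (by positivity)]
          nlinarith [pow_pos hx0 4, mul_nonneg (pow_pos hx0 4).le (by linarith : (0:ℝ) ≤ x - 3)]
        have i2 : (2*x+3)/(12*x^4*(x+1)^2) ≤ 1/2 / x^5 := by
          rw [div_le_div_iff₀ (by positivity) (by positivity)]
          nlinarith [pow_pos hx0 4, pow_pos hx0 5, pow_pos hx0 6]
        exact add_le_add i1 i2
    _ = 2 / x^5 := by ring

lemma tail_bound (n : ℕ) (hn : 3 ≤ n) : ∀ m, n ≤ m →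
    |(s n - fb n) - (s m - fb m)| ≤ 1/2 * (1/((n:ℝ)-1)^4 - 1/((m:ℝ)-1)^4) := by
  intro m hm
  induction m, hm using Nat.le_induction with
  | base => simp
  | succ m hm ih =>
    have hm3 : 3 ≤ m := le_trans hn hm
    have hmr : (3:ℝ) ≤ m := by exact_mod_cast hm3
    have hstep := step_bound m hm3
    have hkey := key_ineq hmr
    have hcast : ((m + 1 : ℕ) : ℝ) - 1 = (m:ℝ) := by push_cast; ring
    calc |(s n - fb n) - (s (m+1) - fb (m+1))|
        ≤ |(s n - fb n) - (s m - fb m)| + |(s m - fb m) - (s (m+1) - fb (m+1))| := by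
          have := abs_add_le ((s n - fb n) - (s m - fb m)) ((s m - fb m) - (s (m+1) - fb (m+1)))
          simpa using this
      _ ≤ 1/2 * (1/((n:ℝ)-1)^4 - 1/((m:ℝ)-1)^4) + 2/(m:ℝ)^5 := add_le_add ih hstep
      _ ≤ 1/2 * (1/((n:ℝ)-1)^4 - 1/(((m+1:ℕ):ℝ)-1)^4) := by
          rw [hcast]
          linarith

lemma tendsto_s : Tendsto s atTop (𝓝 Real.eulerMascheroniConstant) := by
  have h1 : Tendsto (fun n : ℕ => ((harmonic (n-2) : ℚ) : ℝ) - Real.log ((n-2 : ℕ) : ℝ))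
      atTop (𝓝 Real.eulerMascheroniConstant) :=
    Real.tendsto_harmonic_sub_log.comp (tendsto_sub_atTop_nat 2)
  have inner : Tendsto (fun n : ℕ => ((n:ℝ) - 2)/n) atTop (𝓝 1) := by
    have base : Tendsto (fun n : ℕ => 1 - 2*((n:ℝ)+0)⁻¹) atTop (𝓝 (1 - 2*0)) :=
      tendsto_const_nhds.sub ((aux0 0).const_mul 2)
    rw [show (1:ℝ) - 2*0 = 1 by ring] at base
    apply base.congr'
    filter_upwards [eventually_ge_atTop 1] with n hn
    have hn0 : (n:ℝ) ≠ 0 := Nat.cast_ne_zero.mpr (by omega)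
    field_simp
    ring
  have h2 : Tendsto (fun n : ℕ => Real.log (((n:ℝ) - 2)/n)) atTop (𝓝 0) := by
    have := (Real.continuousAt_log one_ne_zero).tendsto.comp inner
    rw [Real.log_one] at this
    exact this
  have h3 : Tendsto (fun n : ℕ => 13/(12*((n:ℝ)-1))) atTop (𝓝 0) := by
    have := (aux0 (-1)).const_mul (13/12 : ℝ)
    rw [mul_zero] at this
    apply this.congr
    intro n
    rw [show ((n:ℝ) + -1) = (n:ℝ) - 1 by ring, mul_comm (12:ℝ) ((n:ℝ)-1), ← div_div]
    ring
  have h4 : Tendsto (fun n : ℕ => 5/(12*(n:ℝ))) atTop (𝓝 0) := by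
    have := (aux0 0).const_mul (5/12 : ℝ)
    rw [mul_zero] at this
    apply this.congr
    intro n
    rw [show ((n:ℝ) + 0) = (n:ℝ) by ring, mul_comm (12:ℝ) (n:ℝ), ← div_div]
    ring
  have hsum := ((h1.add h2).add h3).add h4
  rw [show Real.eulerMascheroniConstant + 0 + 0 + 0 = Real.eulerMascheroniConstant by ring]
    at hsum
  apply hsum.congr'
  filter_upwards [eventually_ge_atTop 3] with n hn
  have hc : ((n - 2 : ℕ) : ℝ) = (n:ℝ) - 2 := by
    have : (2:ℕ) ≤ n := by omega
    push_cast [this]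
    ring
  have hn0 : (n:ℝ) ≠ 0 := Nat.cast_ne_zero.mpr (by omega)
  have hn2 : (n:ℝ) - 2 ≠ 0 := by
    have : (3:ℝ) ≤ n := by exact_mod_cast hn
    linarith
  simp only [s, harm_sum, hc, Real.log_div hn2 hn0]
  ring

lemma abs_bound (n : ℕ) (hn : 3 ≤ n) :
    |s n - Real.eulerMascheroniConstant - fb n| ≤ 1/2 * (1/((n:ℝ)-1)^4) := by
  have hg : Tendsto (fun m : ℕ => s m - fb m) atTop (𝓝 Real.eulerMascheroniConstant) := by
    have := tendsto_s.sub fb_zero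
    rw [sub_zero] at this
    exact this
  have ht : Tendsto (fun m : ℕ => |(s n - fb n) - (s m - fb m)|) atTop
      (𝓝 |(s n - fb n) - Real.eulerMascheroniConstant|) :=
    (tendsto_const_nhds.sub hg).abs
  have hle : |s n - fb n - Real.eulerMascheroniConstant| ≤ 1/2 * (1/((n:ℝ)-1)^4) := by
    refine le_of_tendsto ht ?_
    filter_upwards [eventually_ge_atTop n] with m hm
    refine (tail_bound n hn m hm).trans ?_
    have : (0:ℝ) ≤ 1/(((m:ℝ)-1)^4) := by positivity
    linarith
  rw [show s n - Real.eulerMascheroniConstant - fb n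
    = (s n - fb n) - Real.eulerMascheroniConstant by ring]
  exact hle

theorem rate_three :
    Tendsto (fun n : ℕ => (n : ℝ) ^ 3 * (s n - Real.eulerMascheroniConstant)) atTop
      (𝓝 (1 / 12)) := by
  have hA : Tendsto (fun n : ℕ => (n:ℝ)^3 * fb n) atTop (𝓝 (1/12)) := by
    have base : Tendsto (fun n : ℕ => 1/12 + (1/12)*((n:ℝ)+(-1))⁻¹) atTop
        (𝓝 (1/12 + (1/12)*0)) := tendsto_const_nhds.add ((aux0 (-1)).const_mul (1/12 : ℝ))
    rw [show (1:ℝ)/12 + (1/12)*0 = 1/12 by ring] at base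
    apply base.congr'
    filter_upwards [eventually_ge_atTop 2] with n hn
    have h2 : (2:ℝ) ≤ n := by exact_mod_cast hn
    have hn0 : (n:ℝ) ≠ 0 := by linarith
    have hn1 : (n:ℝ) - 1 ≠ 0 := by
      intro h; rw [sub_eq_zero] at h; linarith [h.symm ▸ h2]
    simp only [fb]
    rw [show ((n:ℝ) + -1) = (n:ℝ) - 1 by ring]
    field_simp
    ring
  have hB : Tendsto (fun n : ℕ => (n:ℝ)^3 * (1/2 * (1/((n:ℝ)-1)^4))) atTop (𝓝 0) := by
    apply tendsto_of_tendsto_of_tendsto_of_le_of_le' tendsto_const_nhds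
      (show Tendsto (fun n : ℕ => 8*((n:ℝ)+0)⁻¹) atTop (𝓝 0) by
        simpa using (aux0 0).const_mul (8:ℝ))
    · filter_upwards [eventually_ge_atTop 2] with n hn
      have h2 : (2:ℝ) ≤ n := by exact_mod_cast hn
      have h1 : (0:ℝ) < (n:ℝ) - 1 := by linarith
      positivity
    · filter_upwards [eventually_ge_atTop 2] with n hn
      have h2 : (2:ℝ) ≤ n := by exact_mod_cast hn
      have h1 : (0:ℝ) < (n:ℝ) - 1 := by linarith
      have h0 : (0:ℝ) < n := by linarith
      rw [show (n:ℝ)^3 * (1/2 * (1/((n:ℝ)-1)^4)) = (n:ℝ)^3/(2*((n:ℝ)-1)^4) by field_simp,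
        show (8:ℝ)*((n:ℝ)+0)⁻¹ = 8/(n:ℝ) by rw [add_zero]; ring,
        div_le_div_iff₀ (by positivity) h0]
      have hp : ((n:ℝ))^4 ≤ (2*((n:ℝ)-1))^4 := by
        apply pow_le_pow_left₀ (by linarith)
        linarith
      nlinarith [pow_pos h1 4]
  have hlo := hA.sub hB
  rw [show (1:ℝ)/12 - 0 = 1/12 by ring] at hlo
  have hhi := hA.add hB
  rw [show (1:ℝ)/12 + 0 = 1/12 by ring] at hhi
  apply tendsto_of_tendsto_of_tendsto_of_le_of_le' hlo hhi
  · filter_upwards [eventually_ge_atTop 3] with n hn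
    have h := (abs_le.mp (abs_bound n hn)).1
    have h3 : (0:ℝ) ≤ (n:ℝ)^3 := by positivity
    nlinarith [mul_le_mul_of_nonneg_left h h3]
  · filter_upwards [eventually_ge_atTop 3] with n hn
    have h := (abs_le.mp (abs_bound n hn)).2
    have h3 : (0:ℝ) ≤ (n:ℝ)^3 := by positivity
    nlinarith [mul_le_mul_of_nonneg_left h h3]
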